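/- Let a, b ≥ 0 with a + b ≤ 1, and consider the Bell-diagonal two-qubit state ρ = a·|Φ⁺⟩⟨Φ⁺| + b·|Φ⁻⟩⟨Φ⁻| + ((1−a−b)/4)·I₄, where |Φ±⟩ = (e₀⊗e₀ ± e₁⊗e₁)/√2. If a + b + 2ab − 3(a² + b²) < 0, then ρ is not separable, i.e. ρ is entangled. -/

import Mathlib

open Matrix
open scoped Kronecker ComplexOrder

noncomputable section

def IsQState {n : Type*} [Fintype n] (ρ : Matrix n n ℂ) : Prop :=
  ρ.PosSemidef ∧ ρ.trace = 1

def IsSepState {dA dB : ℕ}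
    (ρ : Matrix (Fin dA × Fin dB) (Fin dA × Fin dB) ℂ) : Prop :=
  ∃ (k : ℕ) (p : Fin k → ℝ)
    (ρ₁ : Fin k → Matrix (Fin dA) (Fin dA) ℂ)
    (ρ₂ : Fin k → Matrix (Fin dB) (Fin dB) ℂ),
    (∀ m, 0 ≤ p m) ∧ (∑ m, p m = 1) ∧
    (∀ m, IsQState (ρ₁ m)) ∧ (∀ m, IsQState (ρ₂ m)) ∧
    ρ = ∑ m, (p m : ℂ) • (ρ₁ m ⊗ₖ ρ₂ m)

/-- The Bell vector `|Φ⁺⟩ = (e₀⊗e₀ + e₁⊗e₁)/√2`. -/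
def phiPlus : Fin 2 × Fin 2 → ℂ := fun p =>
  ((if p.1 = 0 ∧ p.2 = 0 then 1 else 0) + (if p.1 = 1 ∧ p.2 = 1 then 1 else 0))
    / ((Real.sqrt 2 : ℝ) : ℂ)

/-- The Bell vector `|Φ⁻⟩ = (e₀⊗e₀ − e₁⊗e₁)/√2`. -/
def phiMinus : Fin 2 × Fin 2 → ℂ := fun p =>
  ((if p.1 = 0 ∧ p.2 = 0 then 1 else 0) - (if p.1 = 1 ∧ p.2 = 1 then 1 else 0))
    / ((Real.sqrt 2 : ℝ) : ℂ)

/-- Basic entrywise facts about a qubit state. -/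
lemma qubit_facts (ρ : Matrix (Fin 2) (Fin 2) ℂ) (hρ : IsQState ρ) :
    (ρ 0 0).im = 0 ∧ (ρ 1 1).im = 0 ∧ 0 ≤ (ρ 0 0).re ∧ 0 ≤ (ρ 1 1).re ∧
    (ρ 0 0).re + (ρ 1 1).re = 1 ∧ ρ 1 0 = starRingEnd ℂ (ρ 0 1) ∧
    Complex.normSq (ρ 0 1) ≤ (ρ 0 0).re * (ρ 1 1).re := by
  obtain ⟨hpsd0, htr⟩ := hρ
  obtain ⟨hherm, hpsd⟩ := Matrix.posSemidef_iff_dotProduct_mulVec.mp hpsd0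
  have h10 : ρ 1 0 = starRingEnd ℂ (ρ 0 1) := by
    have := congrFun (congrFun hherm 1) 0
    simpa [Matrix.conjTranspose_apply] using this.symm
  have hd : ∀ i, (ρ i i).im = 0 := by
    intro i
    have := congrFun (congrFun hherm i) i
    simp only [Matrix.conjTranspose_apply] at this
    have h2 := congrArg Complex.im this
    simp only [Complex.star_def, Complex.conj_im] at h2
    linarith
  have h00 := hpsd (Pi.single 0 1)
  have h11 := hpsd (Pi.single 1 1)
  rw [Complex.le_def] at h00 h11
  simp [dotProduct, Matrix.mulVec, Fin.sum_univ_two, Pi.single_apply] at h00 h11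
  have htr' : (ρ 0 0).re + (ρ 1 1).re = 1 := by
    have := congrArg Complex.re htr
    simpa [Matrix.trace, Matrix.diag, Fin.sum_univ_two] using this
  refine ⟨hd 0, hd 1, h00.1, h11.1, htr', h10, ?_⟩
  have key := hpsd ![ρ 1 1, -starRingEnd ℂ (ρ 0 1)]
  have key2 := hpsd ![-(ρ 0 1), ρ 0 0]
  rw [Complex.le_def] at key key2
  simp only [dotProduct, Matrix.mulVec, Fin.sum_univ_two, h10,
    Matrix.cons_val_zero, Matrix.cons_val_one, Matrix.head_cons, Pi.star_apply,
    star_neg, star_star, Complex.star_def] at key key2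
  obtain ⟨k1, -⟩ := key
  obtain ⟨k2, -⟩ := key2
  simp only [Complex.add_re, Complex.mul_re, Complex.neg_re, Complex.neg_im,
    Complex.conj_re, Complex.conj_im, Complex.zero_re, Complex.add_im, Complex.mul_im,
    Complex.normSq_apply] at k1 k2 ⊢
  rw [hd 0, hd 1] at k1 k2
  ring_nf at k1 k2
  nlinarith [k1, k2, htr']

/-- The real core of the entanglement-witness bound. -/
lemma witness_real (p1 q1 u1 v1 p2 q2 u2 v2 e : ℝ) (he : e = 1 ∨ e = -1)
    (hp1 : 0 ≤ p1) (hq1 : 0 ≤ q1) (hp2 : 0 ≤ p2) (hq2 : 0 ≤ q2)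
    (ht1 : p1 + q1 = 1) (ht2 : p2 + q2 = 1)
    (hn1 : u1^2 + v1^2 ≤ p1 * q1) (hn2 : u2^2 + v2^2 ≤ p2 * q2) :
    p1*p2 + q1*q2 + 2*e*(u1*u2 - v1*v2) ≤ 1 := by
  have hprod : (u1^2 + v1^2) * (u2^2 + v2^2) ≤ (p1*q1) * (p2*q2) :=
    mul_le_mul hn1 hn2 (by positivity) (by nlinarith)
  have hS : 0 ≤ p1*q2 + q1*p2 := by positivity
  have key : 2*|u1*u2 - v1*v2| ≤ p1*q2 + q1*p2 := by
    rcases abs_cases (u1*u2 - v1*v2) with ⟨h, -⟩ | ⟨h, -⟩ <;> rw [h] <;>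
      nlinarith [sq_nonneg (u1*v2 + v1*u2), sq_nonneg (u1*v2 - v1*u2),
        sq_nonneg (p1*q2 - q1*p2), hprod, hS]
  have := le_abs_self (u1*u2 - v1*v2)
  have := neg_abs_le (u1*u2 - v1*v2)
  rcases he with rfl | rfl <;> nlinarith [key]

/-- Witness bound for a product state. -/
lemma kron_term_bound (e : ℝ) (he : e = 1 ∨ e = -1)
    (ρ₁ ρ₂ : Matrix (Fin 2) (Fin 2) ℂ) (h1 : IsQState ρ₁) (h2 : IsQState ρ₂) :
    (ρ₁ 0 0 * ρ₂ 0 0 + (e : ℂ) * (ρ₁ 0 1 * ρ₂ 0 1)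
      + (e : ℂ) * (ρ₁ 1 0 * ρ₂ 1 0) + ρ₁ 1 1 * ρ₂ 1 1).re ≤ 1 := by
  obtain ⟨hi1a, hi1b, hr1a, hr1b, ht1, h10a, hn1⟩ := qubit_facts ρ₁ h1
  obtain ⟨hi2a, hi2b, hr2a, hr2b, ht2, h10b, hn2⟩ := qubit_facts ρ₂ h2
  rw [h10a, h10b]
  rw [Complex.normSq_apply] at hn1 hn2
  simp only [Complex.add_re, Complex.mul_re, Complex.mul_im, Complex.ofReal_re,
    Complex.ofReal_im, Complex.conj_re, Complex.conj_im, hi1a, hi1b, hi2a, hi2b]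
  have := witness_real (ρ₁ 0 0).re (ρ₁ 1 1).re (ρ₁ 0 1).re (ρ₁ 0 1).im
    (ρ₂ 0 0).re (ρ₂ 1 1).re (ρ₂ 0 1).re (ρ₂ 0 1).im e he
    hr1a hr1b hr2a hr2b ht1 ht2 (by nlinarith) (by nlinarith)
  nlinarith [this]

/-- Witness bound for a separable state. -/
lemma sep_bound (e : ℝ) (he : e = 1 ∨ e = -1)
    {ρ : Matrix (Fin 2 × Fin 2) (Fin 2 × Fin 2) ℂ} (hsep : IsSepState ρ) :
    (ρ (0,0) (0,0) + (e : ℂ) * ρ (0,0) (1,1)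
      + (e : ℂ) * ρ (1,1) (0,0) + ρ (1,1) (1,1)).re ≤ 1 := by
  obtain ⟨k, p, ρ₁, ρ₂, hp0, hp1, hq1, hq2, rfl⟩ := hsep
  have hterm : ∀ m, ((p m : ℂ) * (ρ₁ m 0 0 * ρ₂ m 0 0 + (e : ℂ) * (ρ₁ m 0 1 * ρ₂ m 0 1)
      + (e : ℂ) * (ρ₁ m 1 0 * ρ₂ m 1 0) + ρ₁ m 1 1 * ρ₂ m 1 1)).re ≤ p m := by
    intro m
    rw [Complex.re_ofReal_mul]
    calc p m * _ ≤ p m * 1 :=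
          mul_le_mul_of_nonneg_left (kron_term_bound e he _ _ (hq1 m) (hq2 m)) (hp0 m)
      _ = p m := mul_one _
  calc (_ : ℝ) = (∑ m, (p m : ℂ) * (ρ₁ m 0 0 * ρ₂ m 0 0
          + (e : ℂ) * (ρ₁ m 0 1 * ρ₂ m 0 1)
          + (e : ℂ) * (ρ₁ m 1 0 * ρ₂ m 1 0) + ρ₁ m 1 1 * ρ₂ m 1 1)).re := by
        congr 1
        simp only [Matrix.sum_apply, Matrix.smul_apply, Matrix.kroneckerMap_apply,
          smul_eq_mul, Finset.mul_sum, ← Finset.sum_add_distrib]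
        exact Finset.sum_congr rfl fun m _ => by ring
    _ = ∑ m, ((p m : ℂ) * (ρ₁ m 0 0 * ρ₂ m 0 0 + (e : ℂ) * (ρ₁ m 0 1 * ρ₂ m 0 1)
          + (e : ℂ) * (ρ₁ m 1 0 * ρ₂ m 1 0) + ρ₁ m 1 1 * ρ₂ m 1 1)).re :=
        Complex.re_sum _ _
    _ ≤ ∑ m, p m := Finset.sum_le_sum fun m _ => hterm m
    _ = 1 := hp1

/-- a Bell-diagonal two-qubit state with
`a + b + 2ab − 3(a² + b²) < 0` is entangled. -/
theorem bell_diagonal_entangled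
    (a b : ℝ) (ha : 0 ≤ a) (hb : 0 ≤ b) (hab : a + b ≤ 1)
    (h : a + b + 2 * a * b - 3 * (a ^ 2 + b ^ 2) < 0) :
    ¬ IsSepState ((a : ℂ) • vecMulVec phiPlus (star phiPlus)
        + (b : ℂ) • vecMulVec phiMinus (star phiMinus)
        + (((1 - a - b) / 4 : ℝ) : ℂ) • (1 : Matrix (Fin 2 × Fin 2) (Fin 2 × Fin 2) ℂ)) := by
  intro hsep
  set M := ((a : ℂ) • vecMulVec phiPlus (star phiPlus)
        + (b : ℂ) • vecMulVec phiMinus (star phiMinus)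
        + (((1 - a - b) / 4 : ℝ) : ℂ) • (1 : Matrix (Fin 2 × Fin 2) (Fin 2 × Fin 2) ℂ)) with hM
  have h2 : ((Real.sqrt 2 : ℝ) : ℂ) * ((Real.sqrt 2 : ℝ) : ℂ) = 2 := by
    rw [← Complex.ofReal_mul, Real.mul_self_sqrt (by norm_num)]; norm_num
  have hne : ((Real.sqrt 2 : ℝ) : ℂ) ≠ 0 :=
    Complex.ofReal_ne_zero.2 (Real.sqrt_ne_zero'.2 (by norm_num))
  have hvals : ∀ e : ℝ, (M (0,0) (0,0) + (e : ℂ) * M (0,0) (1,1)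
      + (e : ℂ) * M (1,1) (0,0) + M (1,1) (1,1))
      = (((a + b + (1 - a - b) / 2 + e * (a - b)) : ℝ) : ℂ) := by
    intro e
    simp only [hM, Matrix.add_apply, Matrix.smul_apply, Matrix.one_apply,
      vecMulVec_apply, Pi.star_apply, phiPlus, phiMinus, smul_eq_mul]
    norm_num [Prod.ext_iff, map_div₀, Complex.conj_ofReal]
    push_cast
    field_simp
    ring_nf
    linear_combination (((a:ℂ) + (a:ℂ)*(e:ℂ) - (e:ℂ)*(b:ℂ) + (b:ℂ)) * (-8)) * h2
  -- one of the two witnesses is violated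
  have hcase : 1 < 3 * a - b ∨ 1 < 3 * b - a := by
    by_contra hc
    push_neg at hc
    obtain ⟨hc1, hc2⟩ := hc
    nlinarith [mul_nonneg ha (by linarith : (0:ℝ) ≤ 1 - 3*a + b),
      mul_nonneg hb (by linarith : (0:ℝ) ≤ 1 - 3*b + a)]
  rcases hcase with hg | hg
  · have hb1 := sep_bound 1 (Or.inl rfl) hsep
    have hv := hvals 1
    rw [show ((1:ℝ):ℂ) = 1 from by norm_num] at hv
    simp only [Complex.ofReal_one] at hb1
    rw [hv, Complex.ofReal_re] at hb1
    linarith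
  · have hb1 := sep_bound (-1) (Or.inr rfl) hsep
    rw [hvals (-1), Complex.ofReal_re] at hb1
    linarith
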